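/- Let s_p, s_q, s_r be three segments in the upper half-plane, each with one endpoint on the x-axis, such that: (i) their grounded endpoints appear on the x-axis in the order s_p, s_q, s_r; (ii) the x-coordinates of their free (non-grounded) endpoints are increasing in the order s_p, s_q, s_r; (iii) the y-coordinates of their free endpoints are monotone (all increasing or all decreasing) in the order s_p, s_q, s_r. If s_p and s_r intersect but s_q intersects neither s_p nor s_r, then a contradiction follows; i.e., under (i)–(iii), if s_p ∩ s_r ≠ ∅ then s_q intersects s_p or s_r. -/

import Mathlib

/-- The grounded point `(x, 0)`. -/
noncomputable def gpt (x : ℝ) : EuclideanSpace ℝ (Fin 2) := WithLp.toLp 2 ![x, 0]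

/-- The grounded segment with grounded endpoint `(x,0)` and free endpoint `f`. -/
noncomputable def GSeg (x : ℝ) (f : EuclideanSpace ℝ (Fin 2)) :
    Set (EuclideanSpace ℝ (Fin 2)) := segment ℝ (gpt x) f

lemma mem_GSeg_iff {x : ℝ} {f z : EuclideanSpace ℝ (Fin 2)} :
    z ∈ GSeg x f ↔ ∃ t : ℝ, 0 ≤ t ∧ t ≤ 1 ∧ z 0 = (1 - t) * x + t * f 0 ∧ z 1 = t * f 1 := by
  simp only [GSeg, segment, Set.mem_setOf_eq]
  constructor
  · rintro ⟨a, b, ha, hb, hab, hz⟩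
    refine ⟨b, hb, by linarith, ?_, ?_⟩
    · have h0 := congrFun (congrArg WithLp.ofLp hz) 0
      simp only [PiLp.add_apply, PiLp.smul_apply, smul_eq_mul, gpt, PiLp.toLp_apply, Matrix.cons_val_zero] at h0
      have hba : a = 1 - b := by linarith
      rw [← h0, hba]
    · have h1 := congrFun (congrArg WithLp.ofLp hz) 1
      simp only [PiLp.add_apply, PiLp.smul_apply, smul_eq_mul, gpt, PiLp.toLp_apply, Matrix.cons_val_one,
        Matrix.head_cons, Matrix.cons_val_zero] at h1
      rw [← h1]; ring
  · rintro ⟨t, ht0, ht1, hz0, hz1⟩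
    refine ⟨1 - t, t, by linarith, ht0, by ring, ?_⟩
    ext i
    fin_cases i <;>
      simp only [PiLp.add_apply, PiLp.smul_apply, smul_eq_mul, gpt, PiLp.toLp_apply, Matrix.cons_val_zero,
        Matrix.cons_val_one, Matrix.head_cons] <;> simp [hz0, hz1]

lemma GSeg_mem_of_height {x : ℝ} {f : EuclideanSpace ℝ (Fin 2)} (hf : 0 < f 1)
    {y : ℝ} (hy0 : 0 ≤ y) (hy1 : y ≤ f 1) :
    (WithLp.toLp 2 ![x + (y / f 1) * (f 0 - x), y] : EuclideanSpace ℝ (Fin 2)) ∈ GSeg x f := by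
  rw [mem_GSeg_iff]
  refine ⟨y / f 1, div_nonneg hy0 hf.le, (div_le_one hf).mpr hy1, ?_, ?_⟩
  · show x + (y / f 1) * (f 0 - x) = _
    ring
  · show y = (y / f 1) * f 1
    field_simp

theorem stmt_11
    (xp xq xr : ℝ) (fp fq fr : EuclideanSpace ℝ (Fin 2))
    (hfp : fp 1 > 0) (hfq : fq 1 > 0) (hfr : fr 1 > 0)
    (hground : xp < xq ∧ xq < xr)
    (hfreex : fp 0 < fq 0 ∧ fq 0 < fr 0)
    (hfreey : (fp 1 < fq 1 ∧ fq 1 < fr 1) ∨ (fr 1 < fq 1 ∧ fq 1 < fp 1))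
    (hpr : (GSeg xp fp ∩ GSeg xr fr).Nonempty) :
    (GSeg xq fq ∩ GSeg xp fp).Nonempty ∨ (GSeg xq fq ∩ GSeg xr fr).Nonempty := by
  obtain ⟨z, hzp, hzr⟩ := hpr
  rw [mem_GSeg_iff] at hzp hzr
  obtain ⟨t, ht0, ht1, hzp0, hzp1⟩ := hzp
  obtain ⟨u, hu0, hu1, hzr0, hzr1⟩ := hzr
  have hys0 : 0 ≤ z 1 := by rw [hzp1]; positivity
  have hysp : (z 1) ≤ fp 1 := by nlinarith
  have hysr : (z 1) ≤ fr 1 := by nlinarith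
  have hysq : (z 1) < fq 1 := by rcases hfreey with ⟨h1, _⟩ | ⟨h1, _⟩ <;> linarith
  -- x-coordinate of segments p and r at height (z 1) is z 0
  have htys : t = z 1 / fp 1 := by rw [hzp1]; field_simp
  have huys : u = z 1 / fr 1 := by rw [hzr1]; field_simp
  have hp_at : xp + (z 1 / fp 1) * (fp 0 - xp) = z 0 := by rw [← htys, hzp0]; ring
  have hr_at : xr + (z 1 / fr 1) * (fr 0 - xr) = z 0 := by rw [← huys, hzr0]; ring
  by_cases hc : xq + (z 1 / fq 1) * (fq 0 - xq) ≤ z 0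
  · -- s_q crosses s_p
    left
    set h : ℝ → ℝ := fun y =>
      (xq + (y / fq 1) * (fq 0 - xq)) - (xp + (y / fp 1) * (fp 0 - xp)) with hh
    have hcont : ContinuousOn h (Set.Icc 0 (z 1)) := by
      apply Continuous.continuousOn
      fun_prop (disch := positivity)
    have h0 : h 0 = xq - xp := by simp [hh]
    have hY : h (z 1) ≤ 0 := by simp only [hh]; rw [hp_at]; linarith
    have : (0 : ℝ) ∈ Set.Icc (h (z 1)) (h 0) := by
      constructor
      · exact hY
      · rw [h0]; linarith [hground.1]
    obtain ⟨y0, hy0mem, hy0⟩ := intermediate_value_Icc' hys0 hcont this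
    obtain ⟨hy00, hy0ys⟩ := hy0mem
    have key : xq + (y0 / fq 1) * (fq 0 - xq) = xp + (y0 / fp 1) * (fp 0 - xp) := by
      have := hy0; simp only [hh] at this; linarith
    refine ⟨WithLp.toLp 2 ![xq + (y0 / fq 1) * (fq 0 - xq), y0], ?_, ?_⟩
    · exact GSeg_mem_of_height hfq hy00 (by linarith)
    · rw [key]; exact GSeg_mem_of_height hfp hy00 (by linarith)
  · -- s_q crosses s_r
    right
    push_neg at hc
    set h : ℝ → ℝ := fun y =>
      (xq + (y / fq 1) * (fq 0 - xq)) - (xr + (y / fr 1) * (fr 0 - xr)) with hh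
    have hcont : ContinuousOn h (Set.Icc 0 (z 1)) := by
      apply Continuous.continuousOn
      fun_prop (disch := positivity)
    have h0 : h 0 = xq - xr := by simp [hh]
    have hY : 0 ≤ h (z 1) := by simp only [hh]; rw [hr_at]; linarith
    have : (0 : ℝ) ∈ Set.Icc (h 0) (h (z 1)) := by
      constructor
      · rw [h0]; linarith [hground.2]
      · exact hY
    obtain ⟨y0, hy0mem, hy0⟩ := intermediate_value_Icc hys0 hcont this
    obtain ⟨hy00, hy0ys⟩ := hy0mem
    have key : xq + (y0 / fq 1) * (fq 0 - xq) = xr + (y0 / fr 1) * (fr 0 - xr) := by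
      have := hy0; simp only [hh] at this; linarith
    refine ⟨WithLp.toLp 2 ![xq + (y0 / fq 1) * (fq 0 - xq), y0], ?_, ?_⟩
    · exact GSeg_mem_of_height hfq hy00 (by linarith)
    · rw [key]; exact GSeg_mem_of_height hfr hy00 (by linarith)
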